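/- The join and meet operations on punctual degrees distribute: for coinfinite primitive recursive sets X, Y, Z, we have R_X ∨ (R_Y ∧ R_Z) ≡_pr (R_X ∨ R_Y) ∧ (R_X ∨ R_Z), where ∨ and ∧ denote the supremum and infimum constructions defined via #(0^U)[s]-counts taking pointwise max and min respectively. -/
import Mathlib


/-- The equivalence relation `R_X`: `x R_X y` iff both in `X` or `x = y`. -/
def REq (X : Set ℕ) (x y : ℕ) : Prop := (x ∈ X ∧ y ∈ X) ∨ x = y

/-- Primitive recursive reducibility between binary relations on ℕ. -/
def PrRed (R S : ℕ → ℕ → Prop) : Prop :=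
  ∃ f : ℕ → ℕ, Primrec f ∧ ∀ x y, R x y ↔ S (f x) (f y)

/-- pr-bireducibility. -/
def PrEquiv (R S : ℕ → ℕ → Prop) : Prop := PrRed R S ∧ PrRed S R

/-- `X` is a primitive recursive set. -/
def PRSet (X : Set ℕ) : Prop :=
  ∃ f : ℕ → Bool, Primrec f ∧ ∀ n, n ∈ X ↔ f n = true

/-- `#(0^X)[s]`: the number of elements of the complement of `X` that are `≤ s`. -/
noncomputable def zc (X : Set ℕ) (s : ℕ) : ℕ := {k | k ≤ s ∧ k ∉ X}.ncard

/-- The join of two sets, via pointwise max of zero-counts. -/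
noncomputable def joinSet (U V : Set ℕ) : Set ℕ :=
  {n | n = 0 ∨ ∃ s, n = s + 1 ∧ max (zc U (s+1)) (zc V (s+1)) ≤ max (zc U s) (zc V s)}

/-- The meet of two sets, via pointwise min of zero-counts. -/
noncomputable def meetSet (U V : Set ℕ) : Set ℕ :=
  {n | n = 0 ∨ ∃ s, n = s + 1 ∧ min (zc U (s+1)) (zc V (s+1)) ≤ min (zc U s) (zc V s)}

lemma mem_joinSet_iff (U V : Set ℕ) (n : ℕ) :
    n ∈ joinSet U V ↔
      (n = 0 ∨ ∃ s, n = s + 1 ∧ max (zc U (s+1)) (zc V (s+1)) ≤ max (zc U s) (zc V s)) :=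
  Iff.rfl

lemma mem_meetSet_iff (U V : Set ℕ) (n : ℕ) :
    n ∈ meetSet U V ↔
      (n = 0 ∨ ∃ s, n = s + 1 ∧ min (zc U (s+1)) (zc V (s+1)) ≤ min (zc U s) (zc V s)) :=
  Iff.rfl

lemma zc_set_fin (U : Set ℕ) (s : ℕ) : {k | k ≤ s ∧ k ∉ U}.Finite :=
  (Set.finite_Iic s).subset (fun _ hk => hk.1)

lemma zc_zero (U : Set ℕ) (h0 : 0 ∈ U) : zc U 0 = 0 := by
  unfold zc
  have : {k | k ≤ 0 ∧ k ∉ U} = ∅ := by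
    ext k
    simp only [Set.mem_setOf_eq, Nat.le_zero, Set.mem_empty_iff_false, iff_false]
    rintro ⟨rfl, hk⟩
    exact hk h0
  rw [this, Set.ncard_empty]

lemma zc_succ_mem (U : Set ℕ) (s : ℕ) (h : s + 1 ∈ U) : zc U (s+1) = zc U s := by
  unfold zc
  congr 1
  ext k
  simp only [Set.mem_setOf_eq]
  constructor
  · rintro ⟨hk, hkU⟩
    rcases Nat.lt_or_ge k (s+1) with hlt | hge
    · exact ⟨Nat.lt_succ_iff.mp hlt, hkU⟩
    · exact absurd (le_antisymm hk hge ▸ h) hkU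
  · rintro ⟨hk, hkU⟩
    exact ⟨hk.trans (Nat.le_succ s), hkU⟩

lemma zc_succ_notMem (U : Set ℕ) (s : ℕ) (h : s + 1 ∉ U) : zc U (s+1) = zc U s + 1 := by
  unfold zc
  have hset : {k | k ≤ s + 1 ∧ k ∉ U} = insert (s+1) {k | k ≤ s ∧ k ∉ U} := by
    ext k
    simp only [Set.mem_setOf_eq, Set.mem_insert_iff]
    constructor
    · rintro ⟨hk, hkU⟩
      rcases Nat.lt_or_ge k (s+1) with hlt | hge
      · exact Or.inr ⟨Nat.lt_succ_iff.mp hlt, hkU⟩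
      · exact Or.inl (le_antisymm hk hge)
    · rintro (rfl | ⟨hk, hkU⟩)
      · exact ⟨le_rfl, h⟩
      · exact ⟨hk.trans (Nat.le_succ s), hkU⟩
  rw [hset, Set.ncard_insert_of_notMem (by simp) (zc_set_fin U s)]

lemma zc_le_succ (U : Set ℕ) (s : ℕ) : zc U s ≤ zc U (s+1) := by
  by_cases h : s + 1 ∈ U
  · rw [zc_succ_mem U s h]
  · rw [zc_succ_notMem U s h]; omega

lemma zc_succ_le (U : Set ℕ) (s : ℕ) : zc U (s+1) ≤ zc U s + 1 := by
  by_cases h : s + 1 ∈ U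
  · rw [zc_succ_mem U s h]; omega
  · rw [zc_succ_notMem U s h]

lemma zc_join (U V : Set ℕ) (hU : 0 ∈ U) (hV : 0 ∈ V) :
    ∀ s, zc (joinSet U V) s = max (zc U s) (zc V s) := by
  intro s
  induction s with
  | zero =>
    rw [zc_zero U hU, zc_zero V hV, zc_zero _ ((mem_joinSet_iff U V 0).mpr (Or.inl rfl))]
    omega
  | succ s ih =>
    have hmono : max (zc U s) (zc V s) ≤ max (zc U (s+1)) (zc V (s+1)) :=
      max_le_max (zc_le_succ U s) (zc_le_succ V s)
    have hstep : max (zc U (s+1)) (zc V (s+1)) ≤ max (zc U s) (zc V s) + 1 :=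
      max_le ((zc_succ_le U s).trans (by omega))
             ((zc_succ_le V s).trans (by omega))
    by_cases h : s + 1 ∈ joinSet U V
    · rcases (mem_joinSet_iff U V _).mp h with h | ⟨t, ht, hle⟩
      · omega
      · rw [show t = s by omega] at hle
        rw [zc_succ_mem _ s ((mem_joinSet_iff U V _).mpr (Or.inr ⟨s, rfl, hle⟩)), ih]
        omega
    · have hgt : ¬ max (zc U (s+1)) (zc V (s+1)) ≤ max (zc U s) (zc V s) := by
        intro hle
        exact h ((mem_joinSet_iff U V _).mpr (Or.inr ⟨s, rfl, hle⟩))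
      rw [zc_succ_notMem _ s h, ih]
      omega

lemma zc_meet (U V : Set ℕ) (hU : 0 ∈ U) (hV : 0 ∈ V) :
    ∀ s, zc (meetSet U V) s = min (zc U s) (zc V s) := by
  intro s
  induction s with
  | zero =>
    rw [zc_zero U hU, zc_zero V hV, zc_zero _ ((mem_meetSet_iff U V 0).mpr (Or.inl rfl))]
    omega
  | succ s ih =>
    have hmono : min (zc U s) (zc V s) ≤ min (zc U (s+1)) (zc V (s+1)) :=
      min_le_min (zc_le_succ U s) (zc_le_succ V s)
    have hstep : min (zc U (s+1)) (zc V (s+1)) ≤ min (zc U s) (zc V s) + 1 := by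
      have h1 := zc_succ_le U s
      have h2 := zc_succ_le V s
      omega
    by_cases h : s + 1 ∈ meetSet U V
    · rcases (mem_meetSet_iff U V _).mp h with h | ⟨t, ht, hle⟩
      · omega
      · rw [show t = s by omega] at hle
        rw [zc_succ_mem _ s ((mem_meetSet_iff U V _).mpr (Or.inr ⟨s, rfl, hle⟩)), ih]
        omega
    · have hgt : ¬ min (zc U (s+1)) (zc V (s+1)) ≤ min (zc U s) (zc V s) := by
        intro hle
        exact h ((mem_meetSet_iff U V _).mpr (Or.inr ⟨s, rfl, hle⟩))
      rw [zc_succ_notMem _ s h, ih]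
      omega

theorem stmt_10 (X Y Z : Set ℕ) (hX : PRSet X) (hY : PRSet Y) (hZ : PRSet Z)
    (hXc : Xᶜ.Infinite) (hYc : Yᶜ.Infinite) (hZc : Zᶜ.Infinite)
    (hX0 : 0 ∈ X) (hY0 : 0 ∈ Y) (hZ0 : 0 ∈ Z) :
    PrEquiv (REq (joinSet X (meetSet Y Z)))
            (REq (meetSet (joinSet X Y) (joinSet X Z))) := by
  have hM0 : (0 : ℕ) ∈ meetSet Y Z := Or.inl rfl
  have hsets : joinSet X (meetSet Y Z) = meetSet (joinSet X Y) (joinSet X Z) := by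
    ext n
    rw [mem_joinSet_iff, mem_meetSet_iff]
    constructor
    · rintro (rfl | ⟨s, rfl, hle⟩)
      · exact Or.inl rfl
      · refine Or.inr ⟨s, rfl, ?_⟩
        rw [zc_join X Y hX0 hY0, zc_join X Y hX0 hY0,
            zc_join X Z hX0 hZ0, zc_join X Z hX0 hZ0]
        rw [zc_meet Y Z hY0 hZ0, zc_meet Y Z hY0 hZ0] at hle
        have h1 := zc_le_succ X s
        have h2 := zc_le_succ Y s
        have h3 := zc_le_succ Z s
        omega
    · rintro (rfl | ⟨s, rfl, hle⟩)
      · exact Or.inl rfl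
      · refine Or.inr ⟨s, rfl, ?_⟩
        rw [zc_meet Y Z hY0 hZ0, zc_meet Y Z hY0 hZ0]
        rw [zc_join X Y hX0 hY0, zc_join X Y hX0 hY0,
            zc_join X Z hX0 hZ0, zc_join X Z hX0 hZ0] at hle
        have h1 := zc_le_succ X s
        have h2 := zc_le_succ Y s
        have h3 := zc_le_succ Z s
        omega
  constructor
  · exact ⟨id, Primrec.id, fun x y => by rw [hsets]; rfl⟩
  · exact ⟨id, Primrec.id, fun x y => by rw [hsets]; rfl⟩
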